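/- With 𝒰, Δ, ℳ, 𝒩, 𝒜, 𝒫 and 𝒮_C as defined, for every C > 0 the following proper inclusions hold: 𝒫 ⊊ 𝒜 and {T↑ γ : γ ∈ 𝒮_C} = 𝒜 ⊊ 𝒩 ⊊ ℳ. Here: (a) the constant weights γ_u = c > 0 belong to ℳ ∖ 𝒩; (b) the product weights γ_u = Π_{j ∈ u} 1/j belong to 𝒩 ∖ 𝒜; (c) the weights γ with γ_u = s^{−2} for u = {1, …, s}, s ∈ ℕ, and γ_u = 0 otherwise, satisfy T↑ γ ∈ 𝒜 ∖ 𝒫. -/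

import Mathlib

open Finset Filter Topology

/-- The difference operator `Δ_v` on families indexed by finite subsets of `ℕ`:
`(Δ_v γ)_u := Σ_{w ⊆ v} (−1)^{|w|} γ_{u ∪ w}`. -/
noncomputable def Δ (v : Finset ℕ) (γ : Finset ℕ → ℝ) (u : Finset ℕ) : ℝ :=
  ∑ w ∈ v.powerset, (-1 : ℝ) ^ w.card * γ (u ∪ w)

/-- Completely monotone weights `ℳ`: all iterated differences are non-negative.
(Since `Δ_∅ γ = γ`, this includes non-negativity of `γ` itself.) -/
def CM (γ : Finset ℕ → ℝ) : Prop := ∀ v u : Finset ℕ, 0 ≤ Δ v γ u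

/-- The class `𝒩`: completely monotone weights tending to `0` along the net
directed by `u ≤ v :⇔ max u ≤ max v`. -/
def Ncond (γ : Finset ℕ → ℝ) : Prop :=
  CM γ ∧ ∀ ε > (0 : ℝ), ∃ r : ℕ, ∀ u : Finset ℕ, r ≤ u.sup id → γ u < ε

/-- The class `𝒜`: completely monotone weights with
`lim_r lim_s (Δ_{[s] ∖ [r]} γ)_u = γ_u` for every `u`. -/
def Acond (γ : Finset ℕ → ℝ) : Prop :=
  CM γ ∧ ∀ u : Finset ℕ, ∃ g : ℕ → ℝ,
    (∀ r : ℕ, Filter.Tendsto (fun s : ℕ => Δ (Finset.range s \ Finset.range r) γ u)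
      Filter.atTop (nhds (g r))) ∧
    Filter.Tendsto g Filter.atTop (nhds (γ u))

/-- The class `𝒫`: summable completely monotone weights. -/
def Pcond (γ : Finset ℕ → ℝ) : Prop := CM γ ∧ Summable γ

/-- The class `𝒮_C` of weights with `Σ_v C^{2|v|} γ_v < ∞`. -/
def SC (C : ℝ) (γ : Finset ℕ → ℝ) : Prop :=
  (∀ u, 0 ≤ γ u) ∧ Summable fun v : Finset ℕ => C ^ (2 * v.card) * γ v

-- ===== from a.lean =====




lemma delta_empty (γ : Finset ℕ → ℝ) (u : Finset ℕ) : Δ ∅ γ u = γ u := by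
  simp [Δ]

lemma delta_insert {j : ℕ} {v : Finset ℕ} (hj : j ∉ v) (γ : Finset ℕ → ℝ) (u : Finset ℕ) :
    Δ (insert j v) γ u = Δ v γ u - Δ v γ (insert j u) := by
  unfold Δ
  rw [Finset.sum_powerset_insert hj]
  have h2 : ∀ w ∈ v.powerset, (-1 : ℝ) ^ (insert j w).card * γ (u ∪ insert j w)
      = -((-1 : ℝ) ^ w.card * γ (insert j u ∪ w)) := by
    intro w hw
    rw [Finset.mem_powerset] at hw
    have hjw : j ∉ w := fun h => hj (hw h)
    have : u ∪ insert j w = insert j u ∪ w := by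
      ext x; simp [Finset.mem_insert, Finset.mem_union, or_comm, or_left_comm, or_assoc]
    rw [Finset.card_insert_of_notMem hjw, this, pow_succ]
    ring
  rw [Finset.sum_congr rfl h2, Finset.sum_neg_distrib]
  ring


-- ===== from b.lean =====

lemma delta_insert_le {γ : Finset ℕ → ℝ} (h : CM γ) (j : ℕ) (v u : Finset ℕ) :
    Δ (insert j v) γ u ≤ Δ v γ u := by
  by_cases hj : j ∈ v
  · rw [Finset.insert_eq_self.2 hj]
  · rw [delta_insert hj]; linarith [h v (insert j u)]

lemma delta_union_le {γ : Finset ℕ → ℝ} (h : CM γ) (v t u : Finset ℕ) :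
    Δ (v ∪ t) γ u ≤ Δ v γ u := by
  induction t using Finset.induction_on with
  | empty => simp
  | @insert j t hjt ih =>
      rw [Finset.union_insert]
      exact le_trans (delta_insert_le h j (v ∪ t) u) ih

lemma delta_anti {γ : Finset ℕ → ℝ} (h : CM γ) {v v' : Finset ℕ} (hv : v ⊆ v') (u : Finset ℕ) :
    Δ v' γ u ≤ Δ v γ u := by
  have := delta_union_le h v v' u
  rwa [Finset.union_eq_right.2 hv] at this

lemma delta_le_self {γ : Finset ℕ → ℝ} (h : CM γ) (v u : Finset ℕ) : Δ v γ u ≤ γ u := by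
  have := delta_anti h (Finset.empty_subset v) u
  rwa [delta_empty] at this

lemma cm_insert_le {γ : Finset ℕ → ℝ} (h : CM γ) (j : ℕ) (u : Finset ℕ) :
    γ (insert j u) ≤ γ u := by
  have h1 := h {j} u
  have : Δ {j} γ u = γ u - γ (insert j u) := by
    have : ({j} : Finset ℕ) = insert j ∅ := rfl
    rw [this, delta_insert (Finset.notMem_empty j), delta_empty, delta_empty]
  linarith [h1, this ▸ h1]

lemma cm_union_le {γ : Finset ℕ → ℝ} (h : CM γ) (u t : Finset ℕ) : γ (u ∪ t) ≤ γ u := by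
  induction t using Finset.induction_on with
  | empty => simp
  | @insert j t hjt ih =>
      rw [Finset.union_insert]
      exact le_trans (cm_insert_le h j (u ∪ t)) ih

lemma cm_mono {γ : Finset ℕ → ℝ} (h : CM γ) {u u' : Finset ℕ} (hu : u ⊆ u') : γ u' ≤ γ u := by
  have := cm_union_le h u u'
  rwa [Finset.union_eq_right.2 hu] at this

lemma cm_nonneg {γ : Finset ℕ → ℝ} (h : CM γ) (u : Finset ℕ) : 0 ≤ γ u := by
  have := h ∅ u; rwa [delta_empty] at this

/-- general decomposition -/
lemma decomp (γ : Finset ℕ → ℝ) : ∀ (t t' u : Finset ℕ), Disjoint t t' →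
    Δ t' γ u = ∑ w ∈ t.powerset, Δ (t' ∪ (t \ w)) γ (u ∪ w) := by
  intro t
  induction t using Finset.induction_on with
  | empty => intro t' u _; simp [delta_empty]
  | @insert j t hjt ih =>
      intro t' u hdisj
      have hjt' : j ∉ t' := Finset.disjoint_left.1 hdisj (Finset.mem_insert_self j t)
      have hdisj' : Disjoint t t' := (Finset.disjoint_insert_left.1 hdisj).2
      rw [Finset.sum_powerset_insert hjt]
      have e1 : ∀ w ∈ t.powerset, Δ (t' ∪ (insert j t \ w)) γ (u ∪ w)
          = Δ (t' ∪ (t \ w)) γ (u ∪ w) - Δ (t' ∪ (t \ w)) γ (insert j (u ∪ w)) := by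
        intro w hw
        rw [Finset.mem_powerset] at hw
        have hjw : j ∉ w := fun h => hjt (hw h)
        have h1 : insert j t \ w = insert j (t \ w) := by
          rw [Finset.insert_sdiff_of_notMem _ hjw]
        have h2 : t' ∪ insert j (t \ w) = insert j (t' ∪ (t \ w)) := by
          simp [Finset.union_insert]
        have h3 : j ∉ t' ∪ (t \ w) := by
          simp only [Finset.mem_union, Finset.mem_sdiff]
          rintro (h | ⟨h, -⟩); exact hjt' h; exact hjt h
        rw [h1, h2, delta_insert h3]
      have e2 : ∀ w ∈ t.powerset, Δ (t' ∪ (insert j t \ insert j w)) γ (u ∪ insert j w)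
          = Δ (t' ∪ (t \ w)) γ (insert j (u ∪ w)) := by
        intro w hw
        rw [Finset.mem_powerset] at hw
        have h1 : insert j t \ insert j w = t \ w := by
          ext x
          simp only [Finset.mem_sdiff, Finset.mem_insert]
          constructor
          · rintro ⟨h1 | h1, h2⟩
            · exact absurd (Or.inl h1) h2
            · exact ⟨h1, fun hx => h2 (Or.inr hx)⟩
          · rintro ⟨h1, h2⟩
            exact ⟨Or.inr h1, by rintro (rfl | hx); exact hjt h1; exact h2 hx⟩
        have h2 : u ∪ insert j w = insert j (u ∪ w) := by
          simp [Finset.union_insert]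
        rw [h1, h2]
      rw [Finset.sum_congr rfl e1, Finset.sum_congr rfl e2, Finset.sum_sub_distrib]
      rw [ih t' u hdisj']
      ring

lemma decomp0 (γ : Finset ℕ → ℝ) (t u : Finset ℕ) :
    γ u = ∑ w ∈ t.powerset, Δ (t \ w) γ (u ∪ w) := by
  have := decomp γ t ∅ u (Finset.disjoint_empty_right t)
  rw [delta_empty] at this
  simpa using this


-- ===== from c.lean =====

noncomputable def dlim (γ : Finset ℕ → ℝ) (v u : Finset ℕ) : ℝ :=
  ⨅ s : ℕ, Δ (Finset.range s \ v) γ u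

lemma subset_range_sup_succ' (u : Finset ℕ) : u ⊆ Finset.range (u.sup id + 1) := by
  intro j hj
  simp only [Finset.mem_range]
  exact Nat.lt_succ_of_le (Finset.le_sup (f := id) hj)

lemma antitone_delta_seq {γ : Finset ℕ → ℝ} (h : CM γ) (v u : Finset ℕ) :
    Antitone (fun s : ℕ => Δ (Finset.range s \ v) γ u) := by
  intro s s' hss
  exact delta_anti h (Finset.sdiff_subset_sdiff (Finset.range_subset_range.2 hss) le_rfl) u

lemma bddBelow_delta_seq {γ : Finset ℕ → ℝ} (h : CM γ) (v u : Finset ℕ) :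
    BddBelow (Set.range fun s : ℕ => Δ (Finset.range s \ v) γ u) := by
  refine ⟨0, ?_⟩
  rintro x ⟨s, rfl⟩
  exact h _ _


lemma tendsto_dlim {γ : Finset ℕ → ℝ} (h : CM γ) (v u : Finset ℕ) :
    Tendsto (fun s : ℕ => Δ (Finset.range s \ v) γ u) atTop (𝓝 (dlim γ v u)) :=
  tendsto_atTop_ciInf (antitone_delta_seq h v u) (bddBelow_delta_seq h v u)

lemma dlim_nonneg {γ : Finset ℕ → ℝ} (h : CM γ) (v u : Finset ℕ) : 0 ≤ dlim γ v u :=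
  le_ciInf fun s => h _ _

lemma dlim_le {γ : Finset ℕ → ℝ} (h : CM γ) (v u : Finset ℕ) (s : ℕ) :
    dlim γ v u ≤ Δ (Finset.range s \ v) γ u :=
  ciInf_le (bddBelow_delta_seq h v u) s

lemma tendsto_powerset_sum {f : Finset ℕ → ℝ} (hf : Summable f) :
    Tendsto (fun r : ℕ => ∑ v ∈ (Finset.range r).powerset, f v) atTop (𝓝 (∑' v, f v)) := by
  have hmap : Tendsto (fun r : ℕ => (Finset.range r).powerset) atTop atTop := by
    apply tendsto_atTop_finset_of_monotone
    · intro a b hab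
      exact Finset.powerset_mono.2 (Finset.range_subset_range.2 hab)
    · intro x
      exact ⟨x.sup id + 1, Finset.mem_powerset.2 (subset_range_sup_succ' x)⟩
  exact hf.hasSum.comp hmap

lemma tail_small {γ : Finset ℕ → ℝ} (hγ : Summable γ) {ε : ℝ} (hε : 0 < ε) :
    ∃ r : ℕ, ∀ F : Finset (Finset ℕ), (∀ v ∈ F, ¬ v ⊆ Finset.range r) → ∑ v ∈ F, γ v < ε := by
  have := summable_iff_vanishing.1 hγ (Metric.ball 0 ε) (Metric.ball_mem_nhds 0 hε)
  obtain ⟨S, hS⟩ := this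
  refine ⟨S.sup (fun v => v.sup id + 1), fun F hF => ?_⟩
  have hdisj : Disjoint F S := by
    rw [Finset.disjoint_left]
    intro v hvF hvS
    refine hF v hvF ?_
    intro j hj
    simp only [Finset.mem_range]
    calc j < v.sup id + 1 := Nat.lt_succ_of_le (Finset.le_sup (f := id) hj)
    _ ≤ S.sup (fun v => v.sup id + 1) := Finset.le_sup (f := fun v => v.sup id + 1) hvS
  have := hS F hdisj
  rw [Metric.mem_ball, Real.dist_eq, sub_zero] at this
  exact lt_of_le_of_lt (le_abs_self _) this


-- ===== from d.lean =====
lemma sum_pow_neg_one (x : Finset ℕ) :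
    ∑ t ∈ x.powerset, (-1 : ℝ) ^ t.card = if x = ∅ then 1 else 0 := by
  have h := Finset.sum_powerset_neg_one_pow_card (x := x)
  apply_fun (Int.cast : ℤ → ℝ) at h
  push_cast at h
  simpa using h


section T
variable {g : Finset ℕ → ℝ}

lemma summable_mask (hg0 : ∀ v, 0 ≤ g v) (hg : Summable g) (P : Finset ℕ → Prop) [DecidablePred P] :
    Summable (fun v => if P v then g v else 0) := by
  apply Summable.of_nonneg_of_le (fun v => ?_) (fun v => ?_) hg
  · split <;> simp [hg0 v]
  · split <;> simp [hg0 v]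

lemma deltaT (hg0 : ∀ v, 0 ≤ g v) (hg : Summable g) (T : Finset ℕ → ℝ) (hT : ∀ u, T u = ∑' v, if u ⊆ v then g v else 0)
    (v u : Finset ℕ) :
    Δ v T u = ∑' v', if u ⊆ v' ∧ Disjoint v v' then g v' else 0 := by
  unfold Δ
  have h1 : ∀ w ∈ v.powerset, (-1 : ℝ) ^ w.card * T (u ∪ w)
      = ∑' v', (-1 : ℝ) ^ w.card * (if u ∪ w ⊆ v' then g v' else 0) := by
    intro w _
    rw [hT, tsum_mul_left]
  rw [Finset.sum_congr rfl h1, ← Summable.tsum_finsetSum (fun w _ => Summable.mul_left _ (summable_mask hg0 hg _))]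
  congr 1
  funext v'
  by_cases huv : u ⊆ v'
  · have h2 : ∀ w, u ∪ w ⊆ v' ↔ w ⊆ v' := fun w => by
      constructor
      · exact fun h => (Finset.union_subset_iff.1 h).2
      · exact fun h => Finset.union_subset huv h
    have h3 : ∀ w ∈ v.powerset, (-1 : ℝ) ^ w.card * (if u ∪ w ⊆ v' then g v' else 0)
        = if w ∈ (v ∩ v').powerset then (-1 : ℝ) ^ w.card * g v' else 0 := by
      intro w hw
      rw [Finset.mem_powerset] at hw
      by_cases hwv : w ⊆ v'
      · rw [if_pos ((h2 w).2 hwv), if_pos (Finset.mem_powerset.2 (Finset.subset_inter hw hwv))]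
      · rw [if_neg (fun h => hwv ((h2 w).1 h)), mul_zero,
          if_neg (fun h => hwv ((Finset.mem_powerset.1 h).trans Finset.inter_subset_right))]
    rw [Finset.sum_congr rfl h3, Finset.sum_ite_mem]
    have h4 : v.powerset ∩ (v ∩ v').powerset = (v ∩ v').powerset := by
      rw [Finset.inter_eq_right]
      exact Finset.powerset_mono.2 Finset.inter_subset_left
    rw [h4, ← Finset.sum_mul, sum_pow_neg_one]
    by_cases hd : Disjoint v v'
    · rw [if_pos (Finset.disjoint_iff_inter_eq_empty.1 hd), if_pos ⟨huv, hd⟩, one_mul]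
    · rw [if_neg (fun h => hd (Finset.disjoint_iff_inter_eq_empty.2 h)), zero_mul,
        if_neg (fun h => hd h.2)]
  · have : ∀ w ∈ v.powerset, (-1 : ℝ) ^ w.card * (if u ∪ w ⊆ v' then g v' else 0) = 0 := by
      intro w _
      rw [if_neg (fun h => huv ((Finset.union_subset_iff.1 h).1)), mul_zero]
    rw [Finset.sum_congr rfl this, Finset.sum_const, smul_zero, if_neg]
    simp [huv]
end T

lemma acond_T (hg0 : ∀ v, 0 ≤ g v) (hg : Summable g) (T : Finset ℕ → ℝ)
    (hT : ∀ u, T u = ∑' v, if u ⊆ v then g v else 0) : Acond T := by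
  have hbound : ∀ (P : Finset ℕ → Prop) [DecidablePred P] (v' : Finset ℕ),
      ‖if P v' then g v' else 0‖ ≤ g v' := by
    intro P _ v'
    rw [Real.norm_eq_abs]
    split
    · rw [abs_of_nonneg (hg0 v')]
    · rw [abs_zero]; exact hg0 v'
  have hΔ := deltaT hg0 hg T hT
  have hCM : CM T := by
    intro v u
    rw [hΔ]
    refine tsum_nonneg (fun v' => ?_)
    split
    · exact hg0 v'
    · exact le_refl 0
  refine ⟨hCM, fun u => ?_⟩
  refine ⟨fun r => ∑' v', if u ⊆ v' ∧ v' ⊆ Finset.range r then g v' else 0, ?_, ?_⟩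
  · intro r
    have key : Tendsto (fun s : ℕ => ∑' v', if u ⊆ v' ∧ Disjoint (Finset.range s \ Finset.range r) v' then g v' else 0)
        atTop (𝓝 (∑' v', if u ⊆ v' ∧ v' ⊆ Finset.range r then g v' else 0)) := by
      apply tendsto_tsum_of_dominated_convergence hg
      · intro v'
        apply Tendsto.congr' _ tendsto_const_nhds
        filter_upwards [eventually_ge_atTop (v'.sup id + 1)] with s hs
        by_cases hvr : v' ⊆ Finset.range r
        · have hdisj : Disjoint (Finset.range s \ Finset.range r) v' := by
            rw [Finset.disjoint_left]
            intro j hj hjv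
            rw [Finset.mem_sdiff, Finset.mem_range, Finset.mem_range] at hj
            exact hj.2 (Finset.mem_range.1 (hvr hjv))
          simp [hvr, hdisj]
        · have : ¬ Disjoint (Finset.range s \ Finset.range r) v' := by
            intro hdisj
            obtain ⟨j, hjv, hjr⟩ : ∃ j ∈ v', ¬ j < r := by
              by_contra hcon
              push_neg at hcon
              exact hvr (fun j hj => Finset.mem_range.2 (hcon j hj))
            have hjs : j < s := lt_of_lt_of_le (Nat.lt_succ_of_le (Finset.le_sup (f := id) hjv)) hs
            exact Finset.disjoint_left.1 hdisj
              (Finset.mem_sdiff.2 ⟨Finset.mem_range.2 hjs, fun h => hjr (Finset.mem_range.1 h)⟩) hjv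
          simp [hvr, this]
      · refine Eventually.of_forall (fun s v' => ?_)
        rw [Real.norm_eq_abs]
        split
        · rw [abs_of_nonneg (hg0 v')]
        · rw [abs_zero]; exact hg0 v'
    refine key.congr (fun s => ?_)
    rw [hΔ]
  · have key : Tendsto (fun r : ℕ => ∑' v', if u ⊆ v' ∧ v' ⊆ Finset.range r then g v' else 0)
        atTop (𝓝 (∑' v', if u ⊆ v' then g v' else 0)) := by
      apply tendsto_tsum_of_dominated_convergence hg
      · intro v'
        apply Tendsto.congr' _ tendsto_const_nhds
        filter_upwards [eventually_ge_atTop (v'.sup id + 1)] with r hr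
        have : v' ⊆ Finset.range r := (subset_range_sup_succ' v').trans (Finset.range_subset_range.2 hr)
        simp [this]
      · refine Eventually.of_forall (fun r v' => ?_)
        rw [Real.norm_eq_abs]
        split
        · rw [abs_of_nonneg (hg0 v')]
        · rw [abs_zero]; exact hg0 v'
    rw [hT u]
    exact key


-- ===== from e.lean =====

/-- key error bound: for `u ⊆ range r` and any `s`, the defect of the difference is
bounded by a tail sum. -/
lemma defect_bound {γ : Finset ℕ → ℝ} (h : CM γ) {u : Finset ℕ} {r : ℕ}
    (hur : u ⊆ Finset.range r) (s : ℕ) {ε : ℝ}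
    (htail : ∀ F : Finset (Finset ℕ), (∀ v ∈ F, ¬ v ⊆ Finset.range r) → ∑ v ∈ F, γ v < ε) :
    γ u - Δ (Finset.range s \ Finset.range r) γ u ≤ ε := by
  set t := Finset.range s \ Finset.range r with ht
  have hdec := decomp0 γ t u
  have hmem : ∅ ∈ t.powerset := Finset.mem_powerset.2 (Finset.empty_subset t)
  rw [← Finset.add_sum_erase _ _ hmem] at hdec
  have h0 : Δ (t \ ∅) γ (u ∪ ∅) = Δ t γ u := by rw [Finset.sdiff_empty, Finset.union_empty]
  rw [h0] at hdec
  -- the remaining sum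
  have hdisj_ut : Disjoint u t := by
    rw [Finset.disjoint_left]
    intro j hju hjt
    rw [ht, Finset.mem_sdiff, Finset.mem_range, Finset.mem_range] at hjt
    exact hjt.2 (Finset.mem_range.1 (hur hju))
  have hinj : Set.InjOn (fun w => u ∪ w) (t.powerset.erase ∅) := by
    intro w1 h1 w2 h2 he
    have k : ∀ w ∈ t.powerset.erase ∅, (u ∪ w) \ u = w := by
      intro w hw
      rw [Finset.union_sdiff_left, Finset.sdiff_eq_self_iff_disjoint]
      have hwt := Finset.mem_powerset.1 (Finset.mem_of_mem_erase hw)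
      exact Finset.disjoint_left.2 (fun a ha hau => Finset.disjoint_left.1 hdisj_ut hau (hwt ha))
    have he' : u ∪ w1 = u ∪ w2 := he
    calc w1 = (u ∪ w1) \ u := (k w1 (Finset.mem_coe.1 h1)).symm
    _ = (u ∪ w2) \ u := by rw [he']
    _ = w2 := k w2 (Finset.mem_coe.1 h2)
  have hsum_le : ∑ w ∈ t.powerset.erase ∅, Δ (t \ w) γ (u ∪ w)
      ≤ ∑ w ∈ t.powerset.erase ∅, γ (u ∪ w) :=
    Finset.sum_le_sum (fun w _ => delta_le_self h _ _)
  have himg : ∑ w ∈ t.powerset.erase ∅, γ (u ∪ w)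
      = ∑ v ∈ (t.powerset.erase ∅).image (fun w => u ∪ w), γ v := by
    rw [Finset.sum_image (fun w1 h1 w2 h2 he => hinj h1 h2 he)]
  have htail' : ∑ v ∈ (t.powerset.erase ∅).image (fun w => u ∪ w), γ v < ε := by
    apply htail
    intro v hv
    obtain ⟨w, hw, rfl⟩ := Finset.mem_image.1 hv
    have hwne : w ≠ ∅ := Finset.ne_of_mem_erase hw
    obtain ⟨j, hj⟩ := Finset.nonempty_iff_ne_empty.2 hwne
    have hjt : j ∈ t := Finset.mem_powerset.1 (Finset.mem_of_mem_erase hw) hj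
    rw [ht, Finset.mem_sdiff, Finset.mem_range, Finset.mem_range] at hjt
    intro hcon
    exact hjt.2 (Finset.mem_range.1 (hcon (Finset.mem_union_right u hj)))
  have : γ u - Δ t γ u = ∑ w ∈ t.powerset.erase ∅, Δ (t \ w) γ (u ∪ w) := by
    linarith [hdec]
  rw [this]
  linarith [hsum_le, himg ▸ htail']

theorem pcond_acond {γ : Finset ℕ → ℝ} (h : Pcond γ) : Acond γ := by
  obtain ⟨hcm, hsum⟩ := h
  refine ⟨hcm, fun u => ?_⟩
  refine ⟨fun r => dlim γ (Finset.range r) u, fun r => tendsto_dlim hcm _ u, ?_⟩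
  rw [Metric.tendsto_atTop]
  intro ε hε
  obtain ⟨r0, hr0⟩ := tail_small hsum (half_pos hε)
  refine ⟨max r0 (u.sup id + 1), fun r hr => ?_⟩
  have hur : u ⊆ Finset.range r :=
    (subset_range_sup_succ' u).trans (Finset.range_subset_range.2 (le_trans (le_max_right _ _) hr))
  have htail : ∀ F : Finset (Finset ℕ), (∀ v ∈ F, ¬ v ⊆ Finset.range r) → ∑ v ∈ F, γ v < ε/2 := by
    intro F hF
    apply hr0
    intro v hv
    intro hcon
    exact hF v hv (hcon.trans (Finset.range_subset_range.2 (le_trans (le_max_left _ _) hr)))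
  have hub : dlim γ (Finset.range r) u ≤ γ u := by
    have := dlim_le hcm (Finset.range r) u 0
    rwa [Finset.range_zero, Finset.empty_sdiff, delta_empty] at this
  have hlb : γ u - ε/2 ≤ dlim γ (Finset.range r) u := by
    apply le_ciInf
    intro s
    have := defect_bound hcm hur s htail
    linarith
  rw [Real.dist_eq, abs_lt]
  constructor <;> linarith

theorem acond_ncond {γ : Finset ℕ → ℝ} (h : Acond γ) : Ncond γ := by
  obtain ⟨hcm, hA⟩ := h
  refine ⟨hcm, fun ε hε => ?_⟩
  obtain ⟨g, hg1, hg2⟩ := hA ∅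
  rw [Metric.tendsto_atTop] at hg2
  obtain ⟨N, hN⟩ := hg2 ε hε
  refine ⟨N + 1, fun u hu => ?_⟩
  have hune : u.Nonempty := by
    rcases Finset.eq_empty_or_nonempty u with rfl | h
    · simp at hu
    · exact h
  obtain ⟨j, hju, hje⟩ := Finset.exists_mem_eq_sup u hune id
  have hjr : N + 1 ≤ j := by rw [hje] at hu; exact hu
  -- γ u ≤ γ {j}
  have h1 : γ u ≤ γ {j} := cm_mono hcm (Finset.singleton_subset_iff.2 hju)
  -- g (N+1) is below Δ (range (j+1) \ range (N+1)) γ ∅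
  have h2 : g (N + 1) ≤ Δ (Finset.range (j+1) \ Finset.range (N+1)) γ ∅ := by
    apply le_of_tendsto (hg1 (N+1))
    filter_upwards [eventually_ge_atTop (j+1)] with s hs
    exact delta_anti hcm (Finset.sdiff_subset_sdiff (Finset.range_subset_range.2 hs) le_rfl) ∅
  have h3 : Δ (Finset.range (j+1) \ Finset.range (N+1)) γ ∅ ≤ Δ {j} γ ∅ := by
    apply delta_anti hcm
    intro x hx
    rw [Finset.mem_singleton] at hx
    rw [hx, Finset.mem_sdiff, Finset.mem_range, Finset.mem_range]
    exact ⟨Nat.lt_succ_self j, by omega⟩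
  have h4 : Δ {j} γ ∅ = γ ∅ - γ {j} := by
    rw [show ({j} : Finset ℕ) = insert j ∅ from rfl,
      delta_insert (Finset.notMem_empty j), delta_empty, delta_empty]
  have h5 : dist (g (N+1)) (γ ∅) < ε := hN (N+1) (Nat.le_succ N)
  rw [Real.dist_eq] at h5
  have h6 : γ ∅ - g (N+1) < ε := by
    have := abs_lt.1 h5
    linarith [this.1]
  linarith


-- ===== from f.lean =====

lemma delta_split (γ : Finset ℕ → ℝ) {u : Finset ℕ} {r s : ℕ}
    (hur : u ⊆ Finset.range r) (hrs : r ≤ s) :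
    Δ (Finset.range s \ Finset.range r) γ u
      = ∑ v ∈ (Finset.range r).powerset.filter (fun v => u ⊆ v), Δ (Finset.range s \ v) γ v := by
  have hdisj : Disjoint (Finset.range r \ u) (Finset.range s \ Finset.range r) := by
    rw [Finset.disjoint_left]
    intro j hj hj'
    rw [Finset.mem_sdiff, Finset.mem_range] at hj hj'
    exact hj'.2 (Finset.mem_range.2 hj.1)
  rw [decomp γ (Finset.range r \ u) (Finset.range s \ Finset.range r) u hdisj]
  have hterm : ∀ w ∈ (Finset.range r \ u).powerset,
      Δ ((Finset.range s \ Finset.range r) ∪ ((Finset.range r \ u) \ w)) γ (u ∪ w)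
        = Δ (Finset.range s \ (u ∪ w)) γ (u ∪ w) := by
    intro w hw
    rw [Finset.mem_powerset] at hw
    congr 1
    ext j
    have hju : j ∈ u → j < r := fun h => Finset.mem_range.1 (hur h)
    have hjw : j ∈ w → j < r ∧ j ∉ u := fun h => by
      have := hw h; rw [Finset.mem_sdiff, Finset.mem_range] at this; exact this
    simp only [Finset.mem_union, Finset.mem_sdiff, Finset.mem_range]
    constructor
    · rintro (⟨⟨hjs, hjr⟩⟩ | ⟨⟨hjr, hju'⟩, hjw'⟩)
      · exact ⟨hjs, by rintro (h | h); exact hjr (hju h); exact hjr (hjw h).1⟩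
      · exact ⟨lt_of_lt_of_le hjr hrs, by rintro (h | h); exact hju' h; exact hjw' h⟩
    · rintro ⟨hjs, hjuw⟩
      by_cases hjr : j < r
      · exact Or.inr ⟨⟨hjr, fun h => hjuw (Or.inl h)⟩, fun h => hjuw (Or.inr h)⟩
      · exact Or.inl ⟨hjs, hjr⟩
  rw [Finset.sum_congr rfl hterm]
  apply Finset.sum_nbij' (fun w => u ∪ w) (fun v => v \ u)
  · intro w hw
    rw [Finset.mem_powerset] at hw
    rw [Finset.mem_filter, Finset.mem_powerset]
    exact ⟨Finset.union_subset hur (hw.trans Finset.sdiff_subset), Finset.subset_union_left⟩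
  · intro v hv
    rw [Finset.mem_filter, Finset.mem_powerset] at hv
    rw [Finset.mem_powerset]
    exact Finset.sdiff_subset_sdiff hv.1 le_rfl
  · intro w hw
    rw [Finset.mem_powerset] at hw
    rw [Finset.union_sdiff_left, Finset.sdiff_eq_self_iff_disjoint]
    rw [Finset.disjoint_left]
    intro a ha hau
    exact (Finset.mem_sdiff.1 (hw ha)).2 hau
  · intro v hv
    rw [Finset.mem_filter] at hv
    exact Finset.union_sdiff_of_subset hv.2
  · intro w _
    rfl

lemma summable_dlim {γ : Finset ℕ → ℝ} (hcm : CM γ) : Summable (fun v => dlim γ v v) := by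
  apply summable_of_sum_le (fun v => dlim_nonneg hcm v v)
  intro F
  set s := F.sup (fun v => v.sup id + 1) with hs
  have hFsub : ∀ v ∈ F, v ⊆ Finset.range s := by
    intro v hv
    refine (subset_range_sup_succ' v).trans (Finset.range_subset_range.2 ?_)
    exact Finset.le_sup (f := fun v => v.sup id + 1) hv
  calc ∑ v ∈ F, dlim γ v v ≤ ∑ v ∈ F, Δ (Finset.range s \ v) γ v :=
        Finset.sum_le_sum (fun v _ => dlim_le hcm v v s)
  _ ≤ ∑ v ∈ (Finset.range s).powerset, Δ (Finset.range s \ v) γ v := by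
        apply Finset.sum_le_sum_of_subset_of_nonneg
        · intro v hv; exact Finset.mem_powerset.2 (hFsub v hv)
        · intro v _ _; exact hcm _ _
  _ = γ ∅ := by
        have := decomp0 γ (Finset.range s) ∅
        simp only [Finset.empty_union] at this
        exact this.symm

theorem acond_rep {γ : Finset ℕ → ℝ} (h : Acond γ) (C : ℝ) (hC : 0 < C) :
    ∃ δ : Finset ℕ → ℝ, SC C δ ∧
      ∀ u, γ u = ∑' v, if u ⊆ v then C ^ (2 * v.card) * δ v else 0 := by
  obtain ⟨hcm, hA⟩ := h
  refine ⟨fun v => (C ^ (2 * v.card))⁻¹ * dlim γ v v, ?_, ?_⟩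
  · constructor
    · intro v
      have := dlim_nonneg hcm v v
      positivity
    · have he : (fun v : Finset ℕ => C ^ (2 * v.card) * ((C ^ (2 * v.card))⁻¹ * dlim γ v v))
          = fun v => dlim γ v v := by
        funext v
        rw [← mul_assoc, mul_inv_cancel₀ (pow_ne_zero _ hC.ne'), one_mul]
      rw [he]
      exact summable_dlim hcm
  · intro u
    have hsimp : (fun v : Finset ℕ => if u ⊆ v then C ^ (2 * v.card) * ((C ^ (2 * v.card))⁻¹ * dlim γ v v) else 0)
        = fun v => if u ⊆ v then dlim γ v v else 0 := by
      funext v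
      rw [← mul_assoc, mul_inv_cancel₀ (pow_ne_zero _ hC.ne'), one_mul]
    rw [hsimp]
    set L := ∑' v, if u ⊆ v then dlim γ v v else 0 with hL
    have hmask : Summable (fun v => if u ⊆ v then dlim γ v v else 0) := by
      apply Summable.of_nonneg_of_le _ _ (summable_dlim hcm)
      · intro v; split
        · exact dlim_nonneg hcm v v
        · exact le_refl 0
      · intro v; split
        · exact le_refl _
        · exact dlim_nonneg hcm v v
    have htends : Tendsto (fun r : ℕ => ∑ v ∈ (Finset.range r).powerset.filter (fun v => u ⊆ v),
        dlim γ v v) atTop (𝓝 L) := by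
      have := tendsto_powerset_sum hmask
      refine this.congr (fun r => ?_)
      rw [Finset.sum_filter]
    obtain ⟨g, hg1, hg2⟩ := hA u
    have hclaim : ∀ r, u.sup id + 1 ≤ r →
        g r = ∑ v ∈ (Finset.range r).powerset.filter (fun v => u ⊆ v), dlim γ v v := by
      intro r hr
      have hur : u ⊆ Finset.range r :=
        (subset_range_sup_succ' u).trans (Finset.range_subset_range.2 hr)
      have ht2 : Tendsto (fun s : ℕ => Δ (Finset.range s \ Finset.range r) γ u) atTop
          (𝓝 (∑ v ∈ (Finset.range r).powerset.filter (fun v => u ⊆ v), dlim γ v v)) := by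
        apply Tendsto.congr' _ (tendsto_finset_sum _ (fun v _ => tendsto_dlim hcm v v))
        filter_upwards [eventually_ge_atTop r] with s hs
        exact (delta_split γ hur hs).symm
      exact tendsto_nhds_unique (hg1 r) ht2
    have hgt : Tendsto g atTop (𝓝 L) := by
      apply Tendsto.congr' _ htends
      filter_upwards [eventually_ge_atTop (u.sup id + 1)] with r hr
      exact (hclaim r hr).symm
    exact tendsto_nhds_unique hg2 hgt


-- ===== from g.lean =====

lemma cm_const {c : ℝ} (hc : 0 ≤ c) : CM (fun _ => c) := by
  intro v u
  unfold Δ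
  rw [← Finset.sum_mul, sum_pow_neg_one]
  split
  · simpa using hc
  · simp

lemma not_ncond_const {c : ℝ} (hc : 0 < c) : ¬ Ncond (fun _ => c) := by
  rintro ⟨-, h⟩
  obtain ⟨r, hr⟩ := h c hc
  have := hr {r} (by simp)
  exact lt_irrefl c this

section gb
variable {γb : Finset ℕ → ℝ} (hγb : ∀ u, γb u = ∏ j ∈ u, ((j : ℝ) + 1)⁻¹)
include hγb

lemma gb_nonneg (u : Finset ℕ) : 0 ≤ γb u := by
  rw [hγb]
  exact Finset.prod_nonneg (fun j _ => by positivity)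

lemma gb_delta (v : Finset ℕ) : ∀ u : Finset ℕ,
    Δ v γb u = γb u * ∏ j ∈ v, (1 - if j ∈ u then 1 else ((j : ℝ) + 1)⁻¹) := by
  induction v using Finset.induction_on with
  | empty => intro u; simp [delta_empty]
  | @insert j v hjv ih =>
      intro u
      rw [delta_insert hjv, ih u, ih (insert j u)]
      have hP : ∏ k ∈ v, (1 - if k ∈ insert j u then 1 else ((k : ℝ) + 1)⁻¹)
          = ∏ k ∈ v, (1 - if k ∈ u then 1 else ((k : ℝ) + 1)⁻¹) := by
        apply Finset.prod_congr rfl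
        intro k hk
        have : k ≠ j := fun h => hjv (h ▸ hk)
        simp [Finset.mem_insert, this]
      rw [hP, Finset.prod_insert hjv]
      by_cases hju : j ∈ u
      · rw [Finset.insert_eq_self.2 hju]
        simp [hju]
      · have : γb (insert j u) = ((j : ℝ) + 1)⁻¹ * γb u := by
          rw [hγb, hγb, Finset.prod_insert hju]
        rw [this]
        simp only [hju, if_false]
        ring

lemma gb_cm : CM γb := by
  intro v u
  rw [gb_delta hγb]
  apply mul_nonneg (gb_nonneg hγb u)
  apply Finset.prod_nonneg
  intro j _
  split
  · simp
  · have h1 : ((j : ℝ) + 1)⁻¹ ≤ 1 := by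
      rw [inv_le_one_iff₀]
      right; linarith [Nat.cast_nonneg (α := ℝ) j]
    linarith

lemma gb_le_inv_sup {u : Finset ℕ} (hu : u.Nonempty) :
    γb u ≤ (((u.sup id : ℕ) : ℝ) + 1)⁻¹ := by
  obtain ⟨j, hju, hje⟩ := Finset.exists_mem_eq_sup u hu id
  have hje' : u.sup id = j := by rw [hje]; rfl
  rw [hje', hγb, ← Finset.mul_prod_erase u _ hju]
  have h1 : ∏ k ∈ u.erase j, ((k : ℝ) + 1)⁻¹ ≤ 1 := by
    apply Finset.prod_le_one
    · intro k _; positivity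
    · intro k _
      rw [inv_le_one_iff₀]; right; linarith [Nat.cast_nonneg (α := ℝ) k]
  have h2 : (0:ℝ) ≤ ((j:ℝ)+1)⁻¹ := by positivity
  calc ((j:ℝ)+1)⁻¹ * ∏ k ∈ u.erase j, ((k : ℝ) + 1)⁻¹ ≤ ((j:ℝ)+1)⁻¹ * 1 :=
        mul_le_mul_of_nonneg_left h1 h2
  _ = ((j:ℝ)+1)⁻¹ := mul_one _

lemma gb_ncond : Ncond γb := by
  refine ⟨gb_cm hγb, fun ε hε => ?_⟩
  obtain ⟨n, hn⟩ := exists_nat_one_div_lt hε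
  refine ⟨n + 1, fun u hu => ?_⟩
  have hune : u.Nonempty := by
    rcases Finset.eq_empty_or_nonempty u with rfl | h
    · simp at hu
    · exact h
  have h1 := gb_le_inv_sup hγb hune
  have h2 : ((n : ℝ) + 1)⁻¹ < ε := by
    rw [one_div] at hn; exact hn
  have h3 : (((u.sup id : ℕ) : ℝ) + 1)⁻¹ ≤ ((n : ℝ) + 1)⁻¹ := by
    apply inv_anti₀ (by positivity)
    have : (n : ℝ) ≤ ((u.sup id : ℕ) : ℝ) := by
      exact_mod_cast le_trans (Nat.le_succ n) hu
    linarith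
  linarith

omit hγb in
lemma gb_telescope : ∀ (r : ℕ), 1 ≤ r → ∀ s, r ≤ s →
    ∏ j ∈ Finset.range s \ Finset.range r, (1 - ((j : ℝ) + 1)⁻¹) = (r : ℝ) / (s : ℝ) := by
  intro r hr s hs
  induction s, hs using Nat.le_induction with
  | base =>
      have hrne : (r:ℝ) ≠ 0 := by
        have : 0 < r := hr
        positivity
      rw [Finset.sdiff_self, Finset.prod_empty, div_self hrne]
  | succ s hs ih =>

      have hmem : s ∉ Finset.range s \ Finset.range r := by simp
      have hins : Finset.range (s+1) \ Finset.range r = insert s (Finset.range s \ Finset.range r) := by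
        ext x
        simp only [Finset.mem_sdiff, Finset.mem_range, Finset.mem_insert]
        omega
      rw [hins, Finset.prod_insert hmem, ih]
      have hs0 : (0:ℝ) < (s:ℝ) := by exact_mod_cast lt_of_lt_of_le hr hs
      have h1 : (1 : ℝ) - ((s : ℝ) + 1)⁻¹ = (s : ℝ) / ((s:ℝ)+1) := by
        field_simp
        ring
      rw [h1]
      push_cast
      field_simp

lemma gb_not_acond : ¬ Acond γb := by
  rintro ⟨hcm, hA⟩
  obtain ⟨g, hg1, hg2⟩ := hA ∅
  have hz : ∀ r, 1 ≤ r → g r = 0 := by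
    intro r hr
    refine tendsto_nhds_unique (hg1 r) ?_
    have h0 : Tendsto (fun s : ℕ => (r : ℝ) / (s : ℝ)) atTop (𝓝 0) :=
      tendsto_const_div_atTop_nhds_zero_nat (r : ℝ)
    apply Tendsto.congr' _ h0
    filter_upwards [eventually_ge_atTop r] with s hs
    rw [gb_delta hγb, hγb]
    simp only [Finset.notMem_empty, if_false, Finset.prod_empty, one_mul]
    exact (gb_telescope r hr s hs).symm
  have hg0 : Tendsto g atTop (𝓝 0) := by
    apply Tendsto.congr' _ tendsto_const_nhds
    filter_upwards [eventually_ge_atTop 1] with r hr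
    exact (hz r hr).symm
  have : γb ∅ = 0 := tendsto_nhds_unique hg2 hg0
  rw [hγb] at this
  simp at this
end gb


-- ===== from h.lean =====

section gc
variable {γc : Finset ℕ → ℝ}
    (hγc : ∀ u, γc u = if u ≠ ∅ ∧ u = Finset.range u.card then ((u.card : ℝ) ^ 2)⁻¹ else 0)
include hγc

lemma gc_nonneg : ∀ u, 0 ≤ γc u := by
  intro u; rw [hγc]
  split
  · exact inv_nonneg.2 (sq_nonneg _)
  · exact le_refl 0

lemma gc_range (s : ℕ) : γc (Finset.range s) = ((s : ℝ) ^ 2)⁻¹ := by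
  rw [hγc]
  rcases Nat.eq_zero_or_pos s with rfl | hs
  · rw [if_neg]
    · simp
    · rintro ⟨h1, -⟩
      exact h1 (by simp)
  · rw [if_pos, Finset.card_range]
    refine ⟨?_, by rw [Finset.card_range]⟩
    rw [← Finset.nonempty_iff_ne_empty, Finset.nonempty_range_iff]
    omega

lemma gc_summable : Summable γc := by
  have hinj : Function.Injective (Finset.range : ℕ → Finset ℕ) := by
    intro a b h
    have := congrArg Finset.card h
    simpa [Finset.card_range] using this
  have hoff : ∀ u ∉ Set.range (Finset.range : ℕ → Finset ℕ), γc u = 0 := by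
    intro u hu
    rw [hγc, if_neg]
    rintro ⟨-, h2⟩
    exact hu ⟨u.card, h2.symm⟩
  rw [← Function.Injective.summable_iff hinj hoff]
  have he : (γc ∘ (Finset.range : ℕ → Finset ℕ)) = fun s : ℕ => ((s : ℝ) ^ 2)⁻¹ :=
    funext fun s => gc_range hγc s
  rw [he]
  have := Real.summable_one_div_nat_pow.2 (by norm_num : 1 < 2)
  simpa [one_div] using this

lemma tup1_not_summable (T : Finset ℕ → ℝ)
    (hT : ∀ u, T u = ∑' v, if u ⊆ v then γc v else 0) : ¬ Summable T := by
  intro hsum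
  have hmask : ∀ u : Finset ℕ, Summable (fun v => if u ⊆ v then γc v else 0) := by
    intro u
    apply Summable.of_nonneg_of_le _ _ (gc_summable hγc)
    · intro v; split
      · exact gc_nonneg hγc v
      · exact le_refl 0
    · intro v; split
      · exact le_refl _
      · exact gc_nonneg hγc v
  have hT0 : ∀ u, 0 ≤ T u := by
    intro u
    rw [hT]
    refine tsum_nonneg (fun v => ?_)
    split
    · exact gc_nonneg hγc v
    · exact le_refl 0
  set M := ∑' u, T u with hM
  have hM0 : 0 ≤ M := tsum_nonneg hT0
  have key : ∀ n : ℕ, 1 ≤ n → (2:ℝ) ^ n ≤ M * (n:ℝ)^2 := by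
    intro n hn1
    have hterm : ∀ u ∈ (Finset.range n).powerset, ((n:ℝ)^2)⁻¹ ≤ T u := by
      intro u hu
      rw [hT]
      have h := Summable.le_tsum (hmask u) (Finset.range n) (fun v _ => by
        split
        · exact gc_nonneg hγc v
        · exact le_refl 0)
      rw [if_pos (Finset.mem_powerset.1 hu), gc_range hγc] at h
      exact h
    have h1 : ((Finset.range n).powerset.card : ℝ) * ((n:ℝ)^2)⁻¹
        ≤ ∑ u ∈ (Finset.range n).powerset, T u := by
      have := Finset.card_nsmul_le_sum (Finset.range n).powerset T (((n:ℝ)^2)⁻¹) hterm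
      simpa [nsmul_eq_mul] using this
    have h2 : ∑ u ∈ (Finset.range n).powerset, T u ≤ M :=
      Summable.sum_le_tsum _ (fun u _ => hT0 u) hsum
    rw [Finset.card_powerset, Finset.card_range] at h1
    have h3 : ((2^n : ℕ) : ℝ) * ((n:ℝ)^2)⁻¹ ≤ M := le_trans h1 h2
    have hn2 : (0:ℝ) < (n:ℝ)^2 := by
      have : 0 < n := hn1
      positivity
    rw [← div_le_iff₀ hn2]
    calc (2:ℝ)^n / (n:ℝ)^2 = ((2^n : ℕ) : ℝ) * ((n:ℝ)^2)⁻¹ := by push_cast; ring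
    _ ≤ M := h3
  -- contradiction via n^2 (1/2)^n → 0
  have htend : Tendsto (fun n : ℕ => ((n:ℝ))^2 * (1/2 : ℝ)^n) atTop (𝓝 0) := by
    apply Summable.tendsto_atTop_zero
    exact summable_pow_mul_geometric_of_norm_lt_one 2 (by rw [Real.norm_eq_abs, abs_of_pos] <;> norm_num)
  have hMc : (0:ℝ) < M + 1 := by linarith
  obtain ⟨n, hnlt, hn1⟩ :=
    ((htend.eventually_lt_const (by positivity : (0:ℝ) < (M+1)⁻¹)).and
      (eventually_ge_atTop 1)).exists
  have h2pow : (0:ℝ) < 2 ^ n := by positivity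
  have hn2 : (0:ℝ) < (n:ℝ)^2 := by
    have : 0 < n := hn1
    positivity
  have this' : (n:ℝ)^2 / 2^n < 1 / (M+1) := by
    rw [div_eq_mul_inv, one_div]
    have e1 : (1/2 : ℝ)^n = ((2:ℝ)^n)⁻¹ := by rw [div_pow, one_pow, one_div]
    rw [← e1]
    exact hnlt
  have l1 := (div_lt_div_iff₀ h2pow hMc).1 this'
  have l2 := key n hn1
  nlinarith [l1, l2, hn2]
end gc


theorem stmt11 (C : ℝ) (hC : 0 < C)
    (Tup : (Finset ℕ → ℝ) → Finset ℕ → ℝ)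
    (hTup : ∀ γ u, Tup γ u = ∑' v : Finset ℕ, if u ⊆ v then C ^ (2 * v.card) * γ v else 0)
    -- witness (b): product weights `γ_u = Π_{j ∈ u} 1/j` (0-indexed: `1/(j+1)`)
    (γb : Finset ℕ → ℝ) (hγb : ∀ u, γb u = ∏ j ∈ u, ((j : ℝ) + 1)⁻¹)
    -- witness (c): `γ_u = s^{−2}` for `u = {1,…,s}` (0-indexed: `u = range s`), else `0`
    (γc : Finset ℕ → ℝ)
    (hγc : ∀ u, γc u = if u ≠ ∅ ∧ u = Finset.range u.card then ((u.card : ℝ) ^ 2)⁻¹ else 0)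
    -- the sum operator with `C = 1`, used for the witness in (c)
    (Tup1 : (Finset ℕ → ℝ) → Finset ℕ → ℝ)
    (hTup1 : ∀ γ u, Tup1 γ u = ∑' v : Finset ℕ, if u ⊆ v then γ v else 0) :
    (∀ γ, Pcond γ → Acond γ) ∧ (∃ γ, Acond γ ∧ ¬ Pcond γ) ∧
    (∀ γ, SC C γ → Acond (Tup γ)) ∧ (∀ γ, Acond γ → ∃ δ, SC C δ ∧ Tup δ = γ) ∧
    (∀ γ, Acond γ → Ncond γ) ∧ (∃ γ, Ncond γ ∧ ¬ Acond γ) ∧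
    (∀ γ, Ncond γ → CM γ) ∧ (∃ γ, CM γ ∧ ¬ Ncond γ) ∧
    (∀ c : ℝ, 0 < c → CM (fun _ => c) ∧ ¬ Ncond (fun _ => c)) ∧
    (Ncond γb ∧ ¬ Acond γb) ∧
    (Summable γc ∧ Acond (Tup1 γc) ∧ ¬ Pcond (Tup1 γc)) := by
  have hγc0 := gc_nonneg hγc
  have hγcs := gc_summable hγc
  have hTup1A : Acond (Tup1 γc) := acond_T hγc0 hγcs _ (hTup1 γc)
  have hTup1P : ¬ Pcond (Tup1 γc) := fun h => tup1_not_summable hγc _ (hTup1 γc) h.2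
  refine ⟨fun γ h => pcond_acond h, ⟨Tup1 γc, hTup1A, hTup1P⟩, ?_, ?_,
    fun γ h => acond_ncond h, ⟨γb, gb_ncond hγb, gb_not_acond hγb⟩,
    fun γ h => h.1, ⟨fun _ => 1, cm_const one_pos.le, not_ncond_const one_pos⟩,
    fun c hc => ⟨cm_const hc.le, not_ncond_const hc⟩,
    ⟨gb_ncond hγb, gb_not_acond hγb⟩, hγcs, hTup1A, hTup1P⟩
  · rintro γ ⟨hγ0, hγs⟩
    exact acond_T (g := fun v => C ^ (2 * v.card) * γ v)
      (fun v => mul_nonneg (by positivity) (hγ0 v)) hγs _ (hTup γ)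
  · intro γ h
    obtain ⟨δ, hSC, hrep⟩ := acond_rep h C hC
    exact ⟨δ, hSC, funext fun u => by rw [hTup δ u]; exact (hrep u).symm⟩
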